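/- For every count vector a_s = (a_s(0), …, a_s(m−1)) of nonnegative integers with M_s = Σ_j a_s(j) ≥ 1, the Krichevsky–Trofimov estimated probability P_e(a_s) = [Π_{j=0}^{m−1} (1/2)(3/2)···(a_s(j) − 1/2)] / [(m/2)(m/2+1)···(m/2 + M_s − 1)] satisfies log P_e(a_s) ≥ Σ_j a_s(j) log(a_s(j)/M_s) − ((m−1)/2) log M_s − log m. -/

import Mathlib

open Real

noncomputable section

/-- The Krichevsky–Trofimov estimated probability
`P_e(a) = [∏_j (1/2)(3/2)···(a(j)-1/2)] / [(m/2)(m/2+1)···(m/2+M-1)]`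
of a count vector `a`, where `M = ∑_j a(j)`. -/
def ktProb (m : ℕ) (a : Fin m → ℕ) : ℝ :=
  (∏ j, ∏ i ∈ Finset.range (a j), ((i : ℝ) + 1 / 2)) /
    ∏ i ∈ Finset.range (∑ j, a j), ((m : ℝ) / 2 + i)

open Finset Filter Topology

lemma neg_log_one_sub_ge (y : ℝ) (h0 : 0 ≤ y) (h1 : y < 1) :
    y + y^2/2 + y^3/3 ≤ -Real.log (1 - y) := by
  set f : ℝ → ℝ := fun y => -Real.log (1 - y) - (y + y^2/2 + y^3/3) with hf
  have key : MonotoneOn f (Set.Ico (0:ℝ) 1) := by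
    apply monotoneOn_of_deriv_nonneg (convex_Ico 0 1)
    · apply ContinuousOn.sub
      · apply ContinuousOn.neg
        apply ContinuousOn.log (by fun_prop)
        intro x hx
        simp only [Set.mem_Ico] at hx
        nlinarith [hx.1, hx.2]
      · fun_prop
    · intro x hx
      rw [interior_Ico] at hx
      simp only [Set.mem_Ioo] at hx
      have h1x : 1 - x ≠ 0 := by nlinarith [hx.1, hx.2]
      apply DifferentiableAt.differentiableWithinAt
      apply DifferentiableAt.sub
      · exact (((differentiable_const (1:ℝ)).sub differentiable_id).differentiableAt.log h1x).neg
      · fun_prop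
    · intro x hx
      rw [interior_Ico] at hx
      simp only [Set.mem_Ioo] at hx
      have h1x : (0:ℝ) < 1 - x := by linarith [hx.2]
      have hd : HasDerivAt f (1/(1-x) - (1 + x + x^2)) x := by
        have hlog : HasDerivAt (fun y : ℝ => Real.log (1 - y)) (-(1/(1-x))) x := by
          have := (Real.hasDerivAt_log h1x.ne').comp x ((hasDerivAt_id x).const_sub 1)
          exact this.congr_deriv (by ring)
        have hpoly : HasDerivAt (fun y : ℝ => y + y^2/2 + y^3/3) (1 + x + x^2) x := by
          have : HasDerivAt (fun y : ℝ => y + y^2/2 + y^3/3) (1 + 2*x/2 + 3*x^2/3) x := by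
            apply HasDerivAt.add
            apply HasDerivAt.add (hasDerivAt_id x)
            · simpa using ((hasDerivAt_pow 2 x).div_const 2)
            · simpa using ((hasDerivAt_pow 3 x).div_const 3)
          convert this using 1; ring
        exact (hlog.neg.sub hpoly).congr_deriv (by ring)
      rw [hd.deriv]
      have e : 1/(1-x) - (1 + x + x^2) = x^3/(1-x) := by field_simp; ring
      rw [e]
      exact div_nonneg (pow_nonneg hx.1.le 3) h1x.le
  have := key (Set.mem_Ico.mpr ⟨le_refl 0, one_pos⟩) (Set.mem_Ico.mpr ⟨h0, h1⟩) h0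
  simpa [hf] using this

lemma psi_ge_one (x : ℝ) (hx : 1 ≤ x) :
    1 ≤ (x + 1/2) * (Real.log (x+1) - Real.log x) := by
  have hx0 : (0:ℝ) < x := by linarith
  have hx1 : (0:ℝ) < x + 1 := by linarith
  set y : ℝ := 1/(x+1) with hy
  have hy0 : 0 ≤ y := by positivity
  have hy1 : y < 1 := by rw [hy, div_lt_one hx1]; linarith
  have hlog : Real.log (x+1) - Real.log x = -Real.log (1 - y) := by
    have e : 1 - y = x / (x+1) := by rw [hy]; field_simp; ring
    rw [e, Real.log_div hx0.ne' hx1.ne']; ring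
  rw [hlog]
  have h1 := neg_log_one_sub_ge y hy0 hy1
  have h2 : 1 ≤ (x + 1/2) * (y + y^2/2 + y^3/3) := by
    rw [hy, ← sub_nonneg]
    have e : (x + 1/2) * (1/(x+1) + (1/(x+1))^2/2 + (1/(x+1))^3/3) - 1
        = (x-1) / (12*(x+1)^3) := by field_simp; ring
    rw [e]
    exact div_nonneg (by linarith) (by positivity)
  nlinarith [h1, h2, hx0]

lemma B_bound (x : ℝ) (hx : 1 ≤ x) :
    (x+1)*Real.log (x+1) - x*Real.log x - Real.log (x+1/2) ≤ 1 := by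
  set h : ℝ → ℝ := fun y => 1 + Real.log (y+1/2) - (y+1)*Real.log (y+1) + y*Real.log y with hh
  have hderiv : ∀ y : ℝ, 1 ≤ y → HasDerivAt h (1/(y+1/2) - (Real.log (y+1) - Real.log y)) y := by
    intro y hy
    have h1 : HasDerivAt (fun z : ℝ => Real.log (z+1/2)) (1/(y+1/2)) y := by
      have := (Real.hasDerivAt_log (by linarith : y + 1/2 ≠ 0)).comp y
        ((hasDerivAt_id y).add_const (1/2))
      exact this.congr_deriv (by simp)
    have h2 : HasDerivAt (fun z : ℝ => (z+1)*Real.log (z+1)) (Real.log (y+1) + 1) y := by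
      have := (Real.hasDerivAt_mul_log (by linarith : y + 1 ≠ 0)).comp y
        ((hasDerivAt_id y).add_const 1)
      exact this.congr_deriv (by simp)
    have h3 : HasDerivAt (fun z : ℝ => z*Real.log z) (Real.log y + 1) y :=
      Real.hasDerivAt_mul_log (by linarith)
    have := (((hasDerivAt_const y (1:ℝ)).add h1).sub h2).add h3
    exact this.congr_deriv (by ring)
  have hcont : ContinuousOn h (Set.Ici (1:ℝ)) := by
    intro y hy
    exact ((hderiv y hy).continuousAt.continuousWithinAt)
  have hanti : AntitoneOn h (Set.Ici (1:ℝ)) := by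
    apply antitoneOn_of_deriv_nonpos (convex_Ici 1) hcont
    · intro y hy
      rw [interior_Ici] at hy
      simp only [Set.mem_Ioi] at hy
      exact (hderiv y hy.le).differentiableAt.differentiableWithinAt
    · intro y hy
      rw [interior_Ici] at hy
      simp only [Set.mem_Ioi] at hy
      rw [(hderiv y hy.le).deriv]
      have hp : (0:ℝ) < y + 1/2 := by linarith
      have := psi_ge_one y hy.le
      rw [sub_nonpos, div_le_iff₀ hp]
      nlinarith
  have htend : Tendsto h atTop (𝓝 0) := by
    have t2 : Tendsto (fun y : ℝ => y * (Real.log (y+1) - Real.log y)) atTop (𝓝 1) := by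
      have := Real.tendsto_mul_log_one_add_div_atTop 1
      apply this.congr'
      filter_upwards [eventually_gt_atTop (0:ℝ)] with y hy
      rw [show (1:ℝ) + 1/y = (y+1)/y by field_simp, Real.log_div (by linarith) hy.ne']
    have t1 : Tendsto (fun y : ℝ => Real.log (y+1/2) - Real.log (y+1)) atTop (𝓝 0) := by
      have tq : Tendsto (fun y : ℝ => (y+1/2)/(y+1)) atTop (𝓝 1) := by
        have : Tendsto (fun y : ℝ => 1 - (1/2)/(y+1)) atTop (𝓝 (1 - 0)) := by
          apply tendsto_const_nhds.sub
          exact Tendsto.div_atTop tendsto_const_nhds (tendsto_atTop_add_const_right _ 1 tendsto_id)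
        rw [sub_zero] at this
        apply this.congr'
        filter_upwards [eventually_gt_atTop (0:ℝ)] with y hy
        field_simp
        ring
      have hlog := (Real.continuousAt_log one_ne_zero).tendsto.comp tq
      rw [Real.log_one] at hlog
      apply hlog.congr'
      filter_upwards [eventually_gt_atTop (0:ℝ)] with y hy
      simp only [Function.comp]
      rw [Real.log_div (by linarith) (by linarith)]
    have : Tendsto h atTop (𝓝 (1 + 0 - 1)) := by
      have := ((tendsto_const_nhds : Tendsto (fun _ : ℝ => (1:ℝ)) atTop (𝓝 1)).add t1).sub t2
      apply this.congr
      intro y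
      simp only [hh]
      ring
    simpa using this
  have hx0 : 0 ≤ h x := by
    apply le_of_tendsto htend
    filter_upwards [eventually_ge_atTop x] with y hy
    exact hanti hx (le_trans hx hy) hy
  simp only [hh] at hx0
  linarith

lemma key_ineq (m A M : ℝ) (hm : 2 ≤ m) (hM : 1 ≤ M) (hA : A = 0 ∨ 1 ≤ A) :
    (A+1)*Real.log (A+1) - A*Real.log A - (M+1)*Real.log (M+1) + M*Real.log M
      - (m-1)/2*(Real.log (M+1) - Real.log M)
      ≤ Real.log (A + 1/2) - Real.log (M + m/2) := by
  have hM0 : (0:ℝ) < M := by linarith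
  have hM1 : (0:ℝ) < M + 1 := by linarith
  have hB : (A+1)*Real.log (A+1) - A*Real.log A - Real.log (A+1/2) ≤ 1 := by
    rcases hA with h0 | h1
    · subst h0
      simp only [zero_add, one_mul, Real.log_one, zero_mul, sub_zero, mul_zero]
      rw [show (1:ℝ)/2 = 2⁻¹ by norm_num, Real.log_inv]
      have := Real.log_two_lt_d9
      linarith
    · exact B_bound A h1
  have hpsi := psi_ge_one M hM
  have hpsi' : 1 ≤ M*(Real.log (M+1) - Real.log M) + (Real.log (M+1) - Real.log M)/2 := by
    nlinarith [hpsi]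
  have hD : 1/(M+1) ≤ Real.log (M+1) - Real.log M := by
    have h := Real.log_le_sub_one_of_pos (show (0:ℝ) < M/(M+1) by positivity)
    rw [Real.log_div hM0.ne' hM1.ne'] at h
    have e : M/(M+1) - 1 = -(1/(M+1)) := by field_simp; ring
    rw [e] at h
    linarith
  have hK1 : Real.log (M + m/2) ≤ Real.log (M+1) + (m-2)/2 * (1/(M+1)) := by
    have hMm : (0:ℝ) < M + m/2 := by linarith
    have h := Real.log_le_sub_one_of_pos (show (0:ℝ) < (M+m/2)/(M+1) by positivity)
    rw [Real.log_div hMm.ne' hM1.ne'] at h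
    have e : (M+m/2)/(M+1) - 1 = (m-2)/2 * (1/(M+1)) := by field_simp; ring
    rw [e] at h
    linarith
  have hprod : (m-2)/2 * (1/(M+1)) ≤ (m-2)/2 * (Real.log (M+1) - Real.log M) :=
    mul_le_mul_of_nonneg_left hD (by linarith)
  nlinarith [hB, hpsi', hK1, hprod]

lemma F_ge (m : ℕ) (hm : 2 ≤ m) :
    ∀ N : ℕ, 1 ≤ N → ∀ a : Fin m → ℕ, ∑ j, a j = N →
    (∑ j, (a j : ℝ) * Real.log (a j)) - (N:ℝ) * Real.log N
        - ((m:ℝ)-1)/2 * Real.log N - Real.log m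
      ≤ (∑ j, ∑ i ∈ Finset.range (a j), Real.log ((i:ℝ) + 1/2))
        - ∑ i ∈ Finset.range N, Real.log ((m:ℝ)/2 + i) := by
  have hm0 : (0:ℝ) < m := by positivity
  intro N hN1
  induction N, hN1 using Nat.le_induction with
  | base =>
    intro a ha
    obtain ⟨k, _, hk⟩ := Finset.exists_ne_zero_of_sum_ne_zero (by rw [ha]; exact one_ne_zero)
    have hak : a k = 1 := by
      have h1 : a k ≤ 1 := ha ▸ Finset.single_le_sum (fun j _ => Nat.zero_le (a j)) (mem_univ k)
      omega
    have hothers : ∀ j, j ≠ k → a j = 0 := by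
      intro j hj
      have h2 : a k + ∑ i ∈ univ.erase k, a i = 1 := by
        rw [Finset.add_sum_erase _ _ (mem_univ k), ha]
      have h3 : ∑ i ∈ univ.erase k, a i = 0 := by omega
      have := (Finset.sum_eq_zero_iff).mp h3 j (Finset.mem_erase.mpr ⟨hj, mem_univ j⟩)
      exact this
    have sum1 : ∑ j, (a j : ℝ) * Real.log (a j) = 0 := by
      apply Finset.sum_eq_zero
      intro j _
      by_cases hj : j = k
      · rw [hj, hak]; simp
      · rw [hothers j hj]; simp
    have sum2 : ∑ j, ∑ i ∈ Finset.range (a j), Real.log ((i:ℝ) + 1/2)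
        = Real.log (1/2) := by
      rw [Finset.sum_eq_single_of_mem k (mem_univ k)]
      · rw [hak]; simp
      · intro j _ hj
        rw [hothers j hj]; simp
    rw [sum1, sum2]
    simp only [Nat.cast_one, Real.log_one, Finset.range_one, Finset.sum_singleton,
      Nat.cast_zero, mul_zero, zero_sub, add_zero]
    have : Real.log ((m:ℝ)/2) = Real.log m - Real.log 2 := by
      rw [Real.log_div (by positivity) (by norm_num)]
    rw [this, show (1:ℝ)/2 = 2⁻¹ by norm_num, Real.log_inv]
    ring_nf
    linarith
  | succ N hN ih =>
    intro a ha
    obtain ⟨k, _, hk⟩ := Finset.exists_ne_zero_of_sum_ne_zero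
      (by rw [ha]; exact Nat.succ_ne_zero N)
    set A : ℕ := a k - 1 with hA
    have hakA : a k = A + 1 := by omega
    set b : Fin m → ℕ := Function.update a k A with hb
    have hbk : b k = A := Function.update_self k A a
    have hbj : ∀ j, j ≠ k → b j = a j := fun j hj => Function.update_of_ne hj A a
    have hsplit : ∀ g : ℕ → ℝ, ∑ j, g (a j) = (∑ j, g (b j)) + (g (a k) - g (b k)) := by
      intro g
      rw [Finset.sum_eq_add_sum_sdiff_singleton_of_mem (mem_univ k) (fun j => g (a j)),
          Finset.sum_eq_add_sum_sdiff_singleton_of_mem (mem_univ k) (fun j => g (b j))]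
      have : ∑ j ∈ univ \ {k}, g (a j) = ∑ j ∈ univ \ {k}, g (b j) := by
        apply Finset.sum_congr rfl
        intro j hj
        rw [hbj j (by simpa using (Finset.mem_sdiff.mp hj).2)]
      rw [this]; ring
    have hsumb : ∑ j, b j = N := by
      have h1 : ∑ j, b j = A + ∑ j ∈ univ \ {k}, a j := by
        rw [Finset.sum_eq_add_sum_sdiff_singleton_of_mem (mem_univ k) (fun j => b j), hbk]
        congr 1
        apply Finset.sum_congr rfl
        intro j hj
        rw [hbj j (by simpa using (Finset.mem_sdiff.mp hj).2)]
      have h2 : a k + ∑ j ∈ univ \ {k}, a j = N + 1 := by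
        rw [← Finset.sum_eq_add_sum_sdiff_singleton_of_mem (mem_univ k) (fun j => a j), ha]
      omega
    have ihb := ih b hsumb
    have key := key_ineq m (A:ℝ) (N:ℝ) (by exact_mod_cast hm) (by exact_mod_cast hN)
      (by rcases Nat.eq_zero_or_pos A with h | h
          · left; exact_mod_cast h
          · right; exact_mod_cast h)
    -- rewrite sums
    have R1 : ∑ j, ∑ i ∈ Finset.range (a j), Real.log ((i:ℝ) + 1/2)
        = (∑ j, ∑ i ∈ Finset.range (b j), Real.log ((i:ℝ) + 1/2))
          + Real.log ((A:ℝ) + 1/2) := by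
      rw [hsplit (fun n => ∑ i ∈ Finset.range n, Real.log ((i:ℝ) + 1/2))]
      rw [hbk, hakA, Finset.sum_range_succ]
      ring
    have R3 : ∑ j, (a j : ℝ) * Real.log (a j)
        = (∑ j, (b j : ℝ) * Real.log (b j))
          + (((A:ℝ)+1) * Real.log ((A:ℝ)+1) - (A:ℝ) * Real.log (A:ℝ)) := by
      rw [hsplit (fun n => (n : ℝ) * Real.log (n : ℕ))]
      rw [hbk, hakA]
      push_cast
      ring
    rw [R1, R3, Finset.sum_range_succ]
    push_cast
    have hcomm : Real.log ((m:ℝ)/2 + (N:ℝ)) = Real.log ((N:ℝ) + (m:ℝ)/2) := by rw [add_comm]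
    linarith [ihb, key, hcomm]

/-- lower bound on the log of the KT estimated probability:
`log P_e(a) ≥ ∑_j a(j) log(a(j)/M) − ((m−1)/2) log M − log m`. -/
theorem ktProb_log_lower_bound (m : ℕ) (hm : 2 ≤ m) (a : Fin m → ℕ)
    (hM : 1 ≤ ∑ j, a j) :
    Real.log (ktProb m a) ≥
      (∑ j, (a j : ℝ) * Real.log ((a j : ℝ) / (∑ j, a j : ℕ))) -
        ((m : ℝ) - 1) / 2 * Real.log (∑ j, a j : ℕ) - Real.log m := by
  set N : ℕ := ∑ j, a j with hN
  have hm0 : (0:ℝ) < m := by positivity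
  have hN0 : (0:ℝ) < N := by exact_mod_cast hM
  -- log of ktProb
  have hlog : Real.log (ktProb m a)
      = (∑ j, ∑ i ∈ Finset.range (a j), Real.log ((i:ℝ) + 1/2))
        - ∑ i ∈ Finset.range N, Real.log ((m:ℝ)/2 + i) := by
    have e1 : Real.log (∏ j, ∏ i ∈ Finset.range (a j), ((i : ℝ) + 1 / 2))
        = ∑ j, ∑ i ∈ Finset.range (a j), Real.log ((i:ℝ) + 1/2) := by
      rw [Real.log_prod]
      · apply Finset.sum_congr rfl
        intro j _
        rw [Real.log_prod]
        intro i _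
        positivity
      · intro j _
        apply Finset.prod_ne_zero_iff.mpr
        intro i _
        positivity
    have e2 : Real.log (∏ i ∈ Finset.range N, ((m : ℝ) / 2 + i))
        = ∑ i ∈ Finset.range N, Real.log ((m:ℝ)/2 + i) := by
      rw [Real.log_prod]
      intro i _
      positivity
    rw [ktProb, ← hN, Real.log_div, e1, e2]
    · apply Finset.prod_ne_zero_iff.mpr
      intro j _
      apply Finset.prod_ne_zero_iff.mpr
      intro i _
      positivity
    · apply Finset.prod_ne_zero_iff.mpr
      intro i _
      positivity
  -- entropy rewrite
  have hent : ∑ j, (a j : ℝ) * Real.log ((a j : ℝ) / (N:ℝ))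
      = (∑ j, (a j : ℝ) * Real.log (a j)) - (N:ℝ) * Real.log N := by
    have : ∀ j : Fin m, (a j : ℝ) * Real.log ((a j : ℝ) / (N:ℝ))
        = (a j : ℝ) * Real.log (a j) - (a j : ℝ) * Real.log N := by
      intro j
      rcases Nat.eq_zero_or_pos (a j) with h | h
      · simp [h]
      · rw [Real.log_div (by exact_mod_cast h.ne') hN0.ne', mul_sub]
    rw [Finset.sum_congr rfl (fun j _ => this j), Finset.sum_sub_distrib, ← Finset.sum_mul]
    congr 2
    rw [hN]
    push_cast
    ring
  rw [ge_iff_le, hlog, hent]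
  have := F_ge m hm N hM a hN.symm
  linarith

end
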